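/- Let G be a finite p-solvable group with O_{p'}(G) = 1. Then C_G(O_p(G)) ≤ O_p(G), i.e., the centralizer of the maximal normal p-subgroup is contained in it. -/

import Mathlib

open Subgroup

/-- The subgroup generated by the `n`-th powers of the elements of `H`
(for `n = p` this is the subgroup usually denoted `H^p`). -/
def pPow {G : Type*} [Group G] (n : ℕ) (H : Subgroup G) : Subgroup G :=
  Subgroup.closure ((fun x => x ^ n) '' (H : Set G))

/-- Iterated commutator subgroup `[N,_m P] = [N, P, P, ..., P]` with `P` repeated `m` times. -/
def itComm {G : Type*} [Group G] (N P : Subgroup G) : ℕ → Subgroup G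
  | 0 => N
  | (m + 1) => ⁅itComm N P m, P⁆

/-- Iterated commutator element `[v, g, g, ..., g]` (`g` repeated `m` times),
with the convention `[v, g] = v⁻¹ g⁻¹ v g`. -/
def itCommElem {G : Type*} [Group G] (v g : G) : ℕ → G
  | 0 => v
  | (m + 1) => (itCommElem v g m)⁻¹ * g⁻¹ * itCommElem v g m * g

theorem normal_biSup {G : Type*} [Group G] (S : Set (Subgroup G))
    (h : ∀ N ∈ S, N.Normal) : (⨆ N ∈ S, N).Normal := by
  constructor
  intro x hx g
  rw [iSup_subtype'] at hx ⊢
  refine Subgroup.iSup_induction (G := G) (fun N : S => (N : Subgroup G))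
    (C := fun y => g * y * g⁻¹ ∈ ⨆ N : S, (N : Subgroup G)) hx
    (fun N y hy => Subgroup.mem_iSup_of_mem N ((h N N.2).conj_mem y hy g))
    (by simpa using Subgroup.one_mem _) ?_
  intro a b ha hb
  have : g * (a * b) * g⁻¹ = (g * a * g⁻¹) * (g * b * g⁻¹) := by group
  rw [this]; exact Subgroup.mul_mem _ ha hb

/-- `O_p(G)`, the largest normal `p`-subgroup of `G`. -/
def Op (p : ℕ) (G : Type*) [Group G] : Subgroup G :=
  ⨆ N ∈ {N : Subgroup G | N.Normal ∧ IsPGroup p N}, N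

/-- `O_{p'}(G)`, the largest normal `p'`-subgroup of `G`. -/
def Op' (p : ℕ) (G : Type*) [Group G] : Subgroup G :=
  ⨆ N ∈ {N : Subgroup G | N.Normal ∧ (Nat.card N).Coprime p}, N

instance OpNormal (p : ℕ) (G : Type*) [Group G] : (Op p G).Normal :=
  normal_biSup _ (fun _ h => h.1)

instance Op'Normal (p : ℕ) (G : Type*) [Group G] : (Op' p G).Normal :=
  normal_biSup _ (fun _ h => h.1)

/-- `O_{p',p}(G)`: the preimage in `G` of `O_p(G / O_{p'}(G))`. -/
def Opp (p : ℕ) (G : Type*) [Group G] : Subgroup G :=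
  (Op p (G ⧸ Op' p G)).comap (QuotientGroup.mk' (Op' p G))

instance OppNormal (p : ℕ) (G : Type*) [Group G] : (Opp p G).Normal :=
  Subgroup.Normal.comap (OpNormal p _) _

/-- `G` is `p`-solvable: it admits a subnormal series each of whose factors is
a `p`-group or a `p'`-group (expressed via relative indices of consecutive terms). -/
def IsPSolvable (p : ℕ) (G : Type*) [Group G] : Prop :=
  ∃ (n : ℕ) (c : ℕ → Subgroup G), c 0 = ⊥ ∧ c n = ⊤ ∧
    ∀ i < n, c i ≤ c (i + 1) ∧
      (∀ g ∈ c (i + 1), ∀ x ∈ c i, g * x * g⁻¹ ∈ c i) ∧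
      ((∃ m, (c i).relIndex (c (i + 1)) = p ^ m) ∨ ((c i).relIndex (c (i + 1))).Coprime p)

universe u

/-- `pLengthLe p n G` means the `p`-length of `G` is at most `n`:
`p`-length `≤ 0` iff `G` is a `p'`-group, and
`p`-length of `G` `≤ n+1` iff the `p`-length of `G / O_{p',p}(G)` is `≤ n`. -/
def pLengthLe (p : ℕ) : ℕ → (G : Type u) → [inst : Group G] → Prop
  | 0, G, _ => (Nat.card G).Coprime p
  | (n + 1), G, _ => pLengthLe p n (G ⧸ Opp p G)

/-- `γ_i(P)`, the lower central series with the convention `γ_1(P) = P`. -/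
def gamma (P : Type*) [Group P] (i : ℕ) : Subgroup P :=
  (⊤ : Subgroup P).lowerCentralSeries (i - 1)

/-- `E_{k,r}(P) = ∏_{i + j(p-1) ≥ k, i ≥ r} γ_i(P)^{p^j}`. -/
def Ekr (p k r : ℕ) (P : Type*) [Group P] : Subgroup P :=
  ⨆ (i : ℕ) (j : ℕ) (_ : k ≤ i + j * (p - 1) ∧ r ≤ i), pPow (p ^ j) (gamma P i)

/-- A potent filtration of type `l` and length `k` of the `p`-group `P`:
a descending chain of normal subgroups `N 0 ⊇ N 1 ⊇ ... ⊇ N k = 1` with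
`[N i, P] ≤ N (i+1)` and `[N i,_l P] ≤ (N (i+1))^p` for all `i < k`. -/
def IsPotentFiltration (p l k : ℕ) {P : Type*} [Group P] (N : ℕ → Subgroup P) : Prop :=
  (∀ i, (N i).Normal) ∧ (∀ i j, i ≤ j → N j ≤ N i) ∧ N k = ⊥ ∧
  (∀ i < k, ⁅N i, (⊤ : Subgroup P)⁆ ≤ N (i + 1)) ∧
  (∀ i < k, itComm (N i) ⊤ l ≤ pPow p (N (i + 1)))

/-- `N` is PF-embedded of type `l` in the subgroup `P` of `G`: there is a potent
filtration of type `l` of `P` starting at `N`. -/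
def IsPFEmbedded (p l : ℕ) {G : Type*} [Group G] (N P : Subgroup G) : Prop :=
  ∃ (k : ℕ) (Nf : ℕ → Subgroup G), Nf 0 = N ∧ Nf k = ⊥ ∧
    (∀ i, Nf i ≤ P) ∧
    (∀ i, ∀ g ∈ P, ∀ x ∈ Nf i, g * x * g⁻¹ ∈ Nf i) ∧
    (∀ i, Nf (i + 1) ≤ Nf i) ∧
    (∀ i < k, ⁅Nf i, P⁆ ≤ Nf (i + 1)) ∧
    (∀ i < k, itComm (Nf i) P l ≤ pPow p (Nf (i + 1)))


/- ===== Auxiliary development for stmt_0 (Hall's lemma) ===== -/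

section HallHigmanAux

variable {p : ℕ} {G : Type u} [Group G]

theorem le_Op {N : Subgroup G} (h1 : N.Normal) (h2 : IsPGroup p N) : N ≤ Op p G :=
  le_biSup (fun N : Subgroup G => N) (⟨h1, h2⟩ : N ∈ {N : Subgroup G | N.Normal ∧ IsPGroup p N})

theorem le_Op' {N : Subgroup G} (h1 : N.Normal) (h2 : (Nat.card N).Coprime p) : N ≤ Op' p G :=
  le_biSup (fun N : Subgroup G => N)
    (⟨h1, h2⟩ : N ∈ {N : Subgroup G | N.Normal ∧ (Nat.card N).Coprime p})

theorem card_sup_dvd [Finite G] (H N : Subgroup G) [N.Normal] :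
    Nat.card ↥(H ⊔ N) ∣ Nat.card H * Nat.card N := by
  rw [Subgroup.card_eq_card_quotient_mul_card_subgroup (N.subgroupOf (H ⊔ N))]
  apply Nat.mul_dvd_mul
  · rw [← Nat.card_congr (QuotientGroup.quotientInfEquivProdNormalQuotient H N).toEquiv]
    exact Dvd.intro _ (Subgroup.card_eq_card_quotient_mul_card_subgroup (N.subgroupOf H)).symm
  · rw [Nat.card_congr (Subgroup.subgroupOfEquivOfLe le_sup_right).toEquiv]

theorem biSup_insert_normal {a : Subgroup G} {t : Set (Subgroup G)} (hat : a.Normal)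
    (hN : (⨆ N ∈ t, (N : Subgroup G)).Normal) : (⨆ N ∈ insert a t, (N : Subgroup G)).Normal := by
  rw [iSup_insert]
  haveI := hat
  haveI := hN
  infer_instance

theorem biSup_normal_pgroup [Finite G] :
    (⨆ N ∈ {N : Subgroup G | N.Normal ∧ IsPGroup p N}, N).Normal ∧
      IsPGroup p ↥(⨆ N ∈ {N : Subgroup G | N.Normal ∧ IsPGroup p N}, (N : Subgroup G)) := by
  haveI : Finite (Subgroup G) := Finite.of_injective _ SetLike.coe_injective
  refine Set.Finite.induction_on_subset
    (motive := fun u _ => (⨆ N ∈ u, N).Normal ∧ IsPGroup p ↥(⨆ N ∈ u, (N : Subgroup G)))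
    _ (Set.toFinite {N : Subgroup G | N.Normal ∧ IsPGroup p N}) ?_ ?_
  · show (⨆ N ∈ (∅ : Set (Subgroup G)), N).Normal ∧ _
    rw [iSup_emptyset]
    exact ⟨inferInstance, IsPGroup.of_bot⟩
  · intro a t hat' _ _ ih
    have hat : a.Normal ∧ IsPGroup p ↥a := hat'
    obtain ⟨hN, hP⟩ := ih
    refine ⟨biSup_insert_normal hat.1 hN, ?_⟩
    rw [iSup_insert]
    haveI := hN
    exact IsPGroup.to_sup_of_normal_right hat.2 hP

theorem Op_pGroup [Finite G] : IsPGroup p (Op p G) :=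
  (biSup_normal_pgroup).2

theorem biSup_normal_coprime [Finite G] :
    (⨆ N ∈ {N : Subgroup G | N.Normal ∧ (Nat.card N).Coprime p}, N).Normal ∧
      (Nat.card ↥(⨆ N ∈ {N : Subgroup G | N.Normal ∧ (Nat.card N).Coprime p},
        (N : Subgroup G))).Coprime p := by
  haveI : Finite (Subgroup G) := Finite.of_injective _ SetLike.coe_injective
  refine Set.Finite.induction_on_subset
    (motive := fun u _ => (⨆ N ∈ u, N).Normal ∧ (Nat.card ↥(⨆ N ∈ u, (N : Subgroup G))).Coprime p)
    _ (Set.toFinite {N : Subgroup G | N.Normal ∧ (Nat.card N).Coprime p}) ?_ ?_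
  · show (⨆ N ∈ (∅ : Set (Subgroup G)), N).Normal ∧ _
    rw [iSup_emptyset]
    exact ⟨inferInstance, by rw [Subgroup.card_bot]; exact Nat.coprime_one_left p⟩
  · intro a t hat' _ _ ih
    have hat : a.Normal ∧ (Nat.card a).Coprime p := hat'
    obtain ⟨hN, hP⟩ := ih
    refine ⟨biSup_insert_normal hat.1 hN, ?_⟩
    rw [iSup_insert]
    haveI := hN
    exact Nat.Coprime.coprime_dvd_left (card_sup_dvd a _) (Nat.Coprime.mul hat.2 hP)

theorem card_Op'_coprime [Finite G] : (Nat.card (Op' p G)).Coprime p :=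
  (biSup_normal_coprime).2

theorem map_Op_le (e : G ≃* G) : (Op p G).map e.toMonoidHom ≤ Op p G := by
  rw [Subgroup.map_le_iff_le_comap]
  refine iSup₂_le fun N hN => ?_
  rw [← Subgroup.map_le_iff_le_comap]
  exact le_Op (hN.1.map e.toMonoidHom e.surjective) (IsPGroup.map hN.2 e.toMonoidHom)

theorem map_Op'_le (e : G ≃* G) : (Op' p G).map e.toMonoidHom ≤ Op' p G := by
  rw [Subgroup.map_le_iff_le_comap]
  refine iSup₂_le fun N hN => ?_
  rw [← Subgroup.map_le_iff_le_comap]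
  refine le_Op' (hN.1.map e.toMonoidHom e.surjective) ?_
  rw [← Nat.card_congr (Subgroup.equivMapOfInjective N e.toMonoidHom e.injective).toEquiv]
  exact hN.2

theorem map_subtype_Op_normal (H : Subgroup G) [hH : H.Normal] :
    ((Op p ↥H).map H.subtype).Normal := by
  constructor
  intro x hx g
  obtain ⟨y, hy, rfl⟩ := hx
  have key : ((MulAut.conjNormal g : MulAut ↥H) y : ↥H) ∈ Op p ↥H :=
    map_Op_le (MulAut.conjNormal g : MulAut ↥H) ⟨y, hy, rfl⟩
  refine ⟨_, key, ?_⟩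
  simp [MulAut.conjNormal_apply]

theorem map_subtype_Op'_normal (H : Subgroup G) [hH : H.Normal] :
    ((Op' p ↥H).map H.subtype).Normal := by
  constructor
  intro x hx g
  obtain ⟨y, hy, rfl⟩ := hx
  have key : ((MulAut.conjNormal g : MulAut ↥H) y : ↥H) ∈ Op' p ↥H :=
    map_Op'_le (MulAut.conjNormal g : MulAut ↥H) ⟨y, hy, rfl⟩
  refine ⟨_, key, ?_⟩
  simp [MulAut.conjNormal_apply]

theorem relindex_subgroupOf_dvd [Finite G] (C : Subgroup G) {H K : Subgroup G} (hHK : H ≤ K)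
    (hnorm : ∀ g ∈ K, ∀ x ∈ H, g * x * g⁻¹ ∈ H) :
    (H.subgroupOf C).relIndex (K.subgroupOf C) ∣ H.relIndex K := by
  haveI hB : (H.subgroupOf K).Normal := by
    constructor
    intro n hn g
    rw [Subgroup.mem_subgroupOf] at hn ⊢
    push_cast
    exact hnorm _ g.2 _ hn
  set ι : ↥(K.subgroupOf C) →* ↥K :=
    MonoidHom.codRestrict (C.subtype.comp (K.subgroupOf C).subtype) K
      (fun x => Subgroup.mem_subgroupOf.mp x.2) with hι
  set φ : ↥(K.subgroupOf C) →* ↥K ⧸ (H.subgroupOf K) :=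
    (QuotientGroup.mk' (H.subgroupOf K)).comp ι with hφ
  have hker : φ.ker = (H.subgroupOf C).subgroupOf (K.subgroupOf C) := by
    ext x
    rw [MonoidHom.mem_ker, hφ, MonoidHom.comp_apply, QuotientGroup.mk'_apply,
      QuotientGroup.eq_one_iff, Subgroup.mem_subgroupOf, Subgroup.mem_subgroupOf,
      Subgroup.mem_subgroupOf]
    rfl
  show ((H.subgroupOf C).subgroupOf (K.subgroupOf C)).index ∣ (H.subgroupOf K).index
  rw [← hker]
  show Nat.card (↥(K.subgroupOf C) ⧸ φ.ker) ∣ Nat.card (↥K ⧸ (H.subgroupOf K))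
  rw [Nat.card_congr (QuotientGroup.quotientKerEquivRange φ).toEquiv]
  exact Subgroup.card_subgroup_dvd_card φ.range

theorem relindex_map_dvd [Finite G] {G' : Type*} [Group G'] (f : G →* G')
    {H K : Subgroup G} (hHK : H ≤ K)
    (hnorm : ∀ g ∈ K, ∀ x ∈ H, g * x * g⁻¹ ∈ H) :
    (H.map f).relIndex (K.map f) ∣ H.relIndex K := by
  haveI hB' : ((H.map f).subgroupOf (K.map f)).Normal := by
    constructor
    intro n hn g
    rw [Subgroup.mem_subgroupOf] at hn ⊢
    obtain ⟨x, hx, hxe⟩ := hn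
    obtain ⟨y, hy, hye⟩ := g.2
    refine ⟨y * x * y⁻¹, hnorm y hy x hx, ?_⟩
    push_cast
    rw [← hxe, ← hye]
    simp [mul_assoc]
  set φ : ↥K →* ↥(K.map f) ⧸ ((H.map f).subgroupOf (K.map f)) :=
    (QuotientGroup.mk' _).comp (f.subgroupMap K) with hφ
  have hsurj : Function.Surjective φ :=
    (QuotientGroup.mk'_surjective _).comp (f.subgroupMap_surjective K)
  have hle : H.subgroupOf K ≤ φ.ker := by
    intro x hx
    rw [MonoidHom.mem_ker, hφ, MonoidHom.comp_apply, QuotientGroup.mk'_apply,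
      QuotientGroup.eq_one_iff, Subgroup.mem_subgroupOf]
    exact ⟨x, Subgroup.mem_subgroupOf.mp hx, rfl⟩
  show ((H.map f).subgroupOf (K.map f)).index ∣ H.relIndex K
  have h1 : ((H.map f).subgroupOf (K.map f)).index = φ.ker.index := by
    show Nat.card _ = Nat.card _
    rw [Nat.card_congr (QuotientGroup.quotientKerEquivOfSurjective φ hsurj).toEquiv]
  rw [h1]
  exact Subgroup.index_dvd_of_le hle

theorem factor_dvd_transfer (hp : p.Prime) {a b : ℕ} (hdvd : a ∣ b)
    (h : (∃ m, b = p ^ m) ∨ b.Coprime p) : (∃ m, a = p ^ m) ∨ a.Coprime p := by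
  rcases h with ⟨m, hm⟩ | hcop
  · left
    obtain ⟨j, _, hj⟩ := (Nat.dvd_prime_pow hp).mp (hm ▸ hdvd)
    exact ⟨j, hj⟩
  · exact Or.inr (Nat.Coprime.coprime_dvd_left hdvd hcop)

theorem isPSolvable_subgroup (hp : p.Prime) [Finite G] (h : IsPSolvable p G) (C : Subgroup G) :
    IsPSolvable p ↥C := by
  obtain ⟨n, c, h0, hn, hstep⟩ := h
  refine ⟨n, fun i => (c i).subgroupOf C,
    by show (c 0).subgroupOf C = ⊥; rw [h0, Subgroup.bot_subgroupOf],
    by show (c n).subgroupOf C = ⊤; rw [hn, Subgroup.top_subgroupOf], ?_⟩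
  intro i hi
  obtain ⟨hle, hconj, hfac⟩ := hstep i hi
  refine ⟨fun x hx => hle hx, ?_, ?_⟩
  · intro g hg x hx
    rw [Subgroup.mem_subgroupOf] at hg hx ⊢
    push_cast
    exact hconj _ hg _ hx
  · exact factor_dvd_transfer hp (relindex_subgroupOf_dvd C hle hconj) hfac

theorem isPSolvable_quotient (hp : p.Prime) [Finite G] (h : IsPSolvable p G) (N : Subgroup G)
    [N.Normal] : IsPSolvable p (G ⧸ N) := by
  obtain ⟨n, c, h0, hn, hstep⟩ := h
  refine ⟨n, fun i => (c i).map (QuotientGroup.mk' N),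
    by show (c 0).map (QuotientGroup.mk' N) = ⊥; rw [h0, Subgroup.map_bot],
    by show (c n).map (QuotientGroup.mk' N) = ⊤;
       rw [hn, Subgroup.map_top_of_surjective _ (QuotientGroup.mk'_surjective N)], ?_⟩
  intro i hi
  obtain ⟨hle, hconj, hfac⟩ := hstep i hi
  refine ⟨Subgroup.map_mono hle, ?_, ?_⟩
  · intro g hg x hx
    obtain ⟨a, ha, rfl⟩ := hg
    obtain ⟨b, hb, rfl⟩ := hx
    refine ⟨a * b * a⁻¹, hconj a ha b hb, ?_⟩
    simp [mul_assoc]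
  · exact factor_dvd_transfer hp (relindex_map_dvd _ hle hconj) hfac

theorem Op_or_Op'_ne_bot_aux (hp : p.Prime) :
    ∀ (n : ℕ) (X : Type u) (_ : Group X) (_ : Finite X) (c : ℕ → Subgroup X),
      c 0 = ⊥ → c n = ⊤ →
      (∀ i < n, c i ≤ c (i + 1) ∧ (∀ g ∈ c (i + 1), ∀ x ∈ c i, g * x * g⁻¹ ∈ c i) ∧
        ((∃ m, (c i).relIndex (c (i + 1)) = p ^ m) ∨ ((c i).relIndex (c (i + 1))).Coprime p)) →
      Nontrivial X → Op p X ≠ ⊥ ∨ Op' p X ≠ ⊥ := by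
  haveI : Fact p.Prime := ⟨hp⟩
  intro n
  induction n with
  | zero =>
    intro X _ _ c h0 hn _ hX
    rw [h0] at hn
    exact absurd hn bot_ne_top
  | succ n ih =>
    intro X _ _ c h0 hn hstep hX
    have hnorm : (c n).Normal := by
      constructor
      intro x hx g
      exact (hstep n (Nat.lt_succ_self n)).2.1 g (by rw [hn]; trivial) x hx
    haveI := hnorm
    by_cases htop : c n = ⊤
    · exact ih X inferInstance inferInstance c h0 htop
        (fun i hi => hstep i (hi.trans (Nat.lt_succ_self n))) hX
    by_cases hbot : c n = ⊥
    · have hrel : (c n).relIndex (c (n + 1)) = Nat.card X := by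
        rw [hbot, Subgroup.relIndex_bot_left, hn]
        exact Nat.card_congr Subgroup.topEquiv.toEquiv
      rcases (hstep n (Nat.lt_succ_self n)).2.2 with ⟨m, hm⟩ | hcop
      · left
        have hXp : IsPGroup p X := IsPGroup.iff_card.mpr ⟨m, by rw [← hrel]; exact hm⟩
        have hle : (⊤ : Subgroup X) ≤ Op p X := le_Op inferInstance (hXp.to_subgroup ⊤)
        intro hOp
        rw [hOp, le_bot_iff] at hle
        exact (bot_ne_top (α := Subgroup X)) hle.symm
      · right
        have hcard : (Nat.card (⊤ : Subgroup X)).Coprime p := by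
          rw [Nat.card_congr Subgroup.topEquiv.toEquiv, ← hrel]
          exact hcop
        have hle : (⊤ : Subgroup X) ≤ Op' p X := le_Op' inferInstance hcard
        intro hOp
        rw [hOp, le_bot_iff] at hle
        exact (bot_ne_top (α := Subgroup X)) hle.symm
    · have hmono : ∀ j, j ≤ n + 1 → ∀ i, i ≤ j → c i ≤ c j := by
        intro j
        induction j with
        | zero => intro _ i hi; rw [Nat.le_zero.mp hi]
        | succ j ihj =>
          intro hj i hi
          by_cases hij : i = j + 1
          · rw [hij]
          · exact (ihj (by omega) i (by omega)).trans (hstep j (by omega)).1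
      set c' : ℕ → Subgroup ↥(c n) := fun i => (c i).subgroupOf (c n) with hc'
      have h0' : c' 0 = ⊥ := by rw [hc']; simp only []; rw [h0, Subgroup.bot_subgroupOf]
      have hn' : c' n = ⊤ := by rw [hc']; simp only []; rw [Subgroup.subgroupOf_self]
      have hstep' : ∀ i < n, c' i ≤ c' (i + 1) ∧
          (∀ g ∈ c' (i + 1), ∀ x ∈ c' i, g * x * g⁻¹ ∈ c' i) ∧
          ((∃ m, (c' i).relIndex (c' (i + 1)) = p ^ m) ∨
            ((c' i).relIndex (c' (i + 1))).Coprime p) := by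
        intro i hi
        obtain ⟨hle, hconj, hfac⟩ := hstep i (hi.trans (Nat.lt_succ_self n))
        refine ⟨fun x hx => hle hx, ?_, ?_⟩
        · intro g hg x hx
          rw [Subgroup.mem_subgroupOf] at hg hx ⊢
          push_cast
          exact hconj _ hg _ hx
        · rw [hc']
          simp only []
          rw [Subgroup.relIndex_subgroupOf (hmono n (by omega) (i + 1) (by omega))]
          exact hfac
      haveI : Nontrivial ↥(c n) := (Subgroup.nontrivial_iff_ne_bot (c n)).mpr hbot
      rcases ih ↥(c n) inferInstance inferInstance c' h0' hn' hstep' ‹_› with hO | hO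
      · left
        intro hcontra
        have hle : ((Op p ↥(c n)).map (c n).subtype) ≤ Op p X :=
          le_Op (map_subtype_Op_normal (c n)) (IsPGroup.map Op_pGroup (c n).subtype)
        rw [hcontra, le_bot_iff,
          Subgroup.map_eq_bot_iff_of_injective _ (Subgroup.subtype_injective _)] at hle
        exact hO hle
      · right
        intro hcontra
        have hcard : (Nat.card ↥((Op' p ↥(c n)).map (c n).subtype)).Coprime p := by
          rw [← Nat.card_congr (Subgroup.equivMapOfInjective _ _
            (Subgroup.subtype_injective (c n))).toEquiv]
          exact card_Op'_coprime
        have hle : ((Op' p ↥(c n)).map (c n).subtype) ≤ Op' p X :=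
          le_Op' (map_subtype_Op'_normal (c n)) hcard
        rw [hcontra, le_bot_iff,
          Subgroup.map_eq_bot_iff_of_injective _ (Subgroup.subtype_injective _)] at hle
        exact hO hle

theorem Op_or_Op'_ne_bot (hp : p.Prime) [Finite G] (h : IsPSolvable p G) (hX : Nontrivial G) :
    Op p G ≠ ⊥ ∨ Op' p G ≠ ⊥ := by
  obtain ⟨n, c, h0, hn, hstep⟩ := h
  exact Op_or_Op'_ne_bot_aux hp n G inferInstance inferInstance c h0 hn hstep hX

theorem card_comap_mk' [Finite G] (Z : Subgroup G) [Z.Normal] (W : Subgroup (G ⧸ Z)) :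
    Nat.card ↥(W.comap (QuotientGroup.mk' Z)) = Nat.card W * Nat.card Z := by
  set K := W.comap (QuotientGroup.mk' Z) with hK
  have hZK : Z ≤ K := by
    intro z hz
    show QuotientGroup.mk' Z z ∈ W
    have h1 : QuotientGroup.mk' Z z = 1 := (QuotientGroup.eq_one_iff z).mpr hz
    rw [h1]; exact W.one_mem
  set φ := (QuotientGroup.mk' Z).subgroupMap K with hφ
  have hsurj := (QuotientGroup.mk' Z).subgroupMap_surjective K
  have hcard := Subgroup.card_eq_card_quotient_mul_card_subgroup (s := φ.ker)
  rw [Nat.card_congr (QuotientGroup.quotientKerEquivOfSurjective φ hsurj).toEquiv] at hcard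
  have h1 : Nat.card ↥(K.map (QuotientGroup.mk' Z)) = Nat.card W := by
    rw [Subgroup.map_comap_eq_self_of_surjective (QuotientGroup.mk'_surjective Z) W]
  have h2 : Nat.card φ.ker = Nat.card Z := by
    have hker : φ.ker = Z.subgroupOf K := by
      ext x
      rw [MonoidHom.mem_ker, Subgroup.mem_subgroupOf, Subtype.ext_iff]
      show (QuotientGroup.mk' Z) (x : G) = (1 : G ⧸ Z) ↔ _
      rw [QuotientGroup.mk'_apply, QuotientGroup.eq_one_iff]
    rw [hker, Nat.card_congr (Subgroup.subgroupOfEquivOfLe hZK).toEquiv]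
  rw [h1, h2] at hcard
  exact hcard

theorem Op_quotient_Op_eq_bot (hp : p.Prime) [Finite G] : Op p (G ⧸ Op p G) = ⊥ := by
  haveI : Fact p.Prime := ⟨hp⟩
  set Z := Op p G with hZ
  set W := Op p (G ⧸ Z) with hW
  set K := W.comap (QuotientGroup.mk' Z) with hK
  have hcard : Nat.card K = Nat.card W * Nat.card Z := card_comap_mk' Z W
  obtain ⟨a, ha⟩ := IsPGroup.iff_card.mp (Op_pGroup (G := G) (p := p))
  obtain ⟨b, hb⟩ := IsPGroup.iff_card.mp (Op_pGroup (G := G ⧸ Z) (p := p))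
  have hKp : IsPGroup p K := IsPGroup.iff_card.mpr ⟨b + a, by rw [hcard, ha, hb, pow_add]⟩
  haveI hKn : K.Normal := Subgroup.Normal.comap (OpNormal p (G ⧸ Z)) (QuotientGroup.mk' Z)
  have hle : K ≤ Z := le_Op hKn hKp
  have hfinal : W ≤ ⊥ := by
    rw [← Subgroup.map_comap_eq_self_of_surjective (QuotientGroup.mk'_surjective Z) W]
    calc K.map (QuotientGroup.mk' Z) ≤ Z.map (QuotientGroup.mk' Z) := Subgroup.map_mono hle
      _ = ⊥ := (Subgroup.map_eq_bot_iff _).mpr (by rw [QuotientGroup.ker_mk'])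
  exact le_bot_iff.mp hfinal

theorem pgroup_of_pSolvable (hp : p.Prime) [Finite G] (hsolv : IsPSolvable p G)
    (hO : Op' p G = ⊥) (hZc : (Op p G : Subgroup G) ≤ Subgroup.center G) : IsPGroup p G := by
  haveI : Fact p.Prime := ⟨hp⟩
  by_contra hnp
  set Z := Op p G with hZ
  obtain ⟨a, haZ⟩ := IsPGroup.iff_card.mp (Op_pGroup (G := G) (p := p))
  haveI hq : Nontrivial (G ⧸ Z) := by
    rcases subsingleton_or_nontrivial (G ⧸ Z) with hs | hs
    · exfalso
      apply hnp
      apply IsPGroup.iff_card.mpr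
      refine ⟨a, ?_⟩
      have hc := Subgroup.card_eq_card_quotient_mul_card_subgroup Z
      rw [Nat.card_of_subsingleton (1 : G ⧸ Z), one_mul] at hc
      rw [hc]
      exact haZ
    · exact hs
  have hWne : Op' p (G ⧸ Z) ≠ ⊥ := by
    rcases Op_or_Op'_ne_bot hp (isPSolvable_quotient hp hsolv Z) hq with h | h
    · exact absurd (Op_quotient_Op_eq_bot hp) h
    · exact h
  set W := Op' p (G ⧸ Z) with hW
  set D := W.comap (QuotientGroup.mk' Z) with hD
  haveI hDn : D.Normal := Subgroup.Normal.comap (Op'Normal p (G ⧸ Z)) (QuotientGroup.mk' Z)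
  have hZD : Z ≤ D := by
    intro z hz
    show QuotientGroup.mk' Z z ∈ W
    have h1 : QuotientGroup.mk' Z z = 1 := (QuotientGroup.eq_one_iff z).mpr hz
    rw [h1]; exact W.one_mem
  set N := Z.subgroupOf D with hN
  haveI hNn : N.Normal := by
    constructor
    intro x hx g
    rw [hN, Subgroup.mem_subgroupOf] at hx ⊢
    push_cast
    exact (OpNormal p G).conj_mem _ hx _
  have hcardN : Nat.card N = Nat.card Z := by
    rw [hN, Nat.card_congr (Subgroup.subgroupOfEquivOfLe hZD).toEquiv]
  have hcardD : Nat.card D = Nat.card W * Nat.card Z := card_comap_mk' Z W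
  have hindexN : N.index = Nat.card W := by
    have h1 := Subgroup.card_eq_card_quotient_mul_card_subgroup (s := N)
    rw [← Subgroup.index_eq_card, hcardN, hcardD] at h1
    exact Nat.eq_of_mul_eq_mul_right Nat.card_pos h1.symm
  have hWcop : (Nat.card W).Coprime p := card_Op'_coprime
  have hcop : Nat.Coprime (Nat.card N) N.index := by
    rw [hcardN, haZ, hindexN]
    exact Nat.Coprime.pow_left a hWcop.symm
  obtain ⟨Qt, hQt⟩ := Subgroup.exists_right_complement'_of_coprime hcop
  set Q := Qt.map D.subtype with hQdef
  have hcardQt : Nat.card Qt = Nat.card W := by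
    have hm := hQt.card_mul
    rw [hcardN, hcardD] at hm
    exact Nat.eq_of_mul_eq_mul_right Nat.card_pos
      (by rw [mul_comm (Nat.card Z) (Nat.card Qt)] at hm; rw [hm])
  have hQchar : ∀ x : G, x ∈ Q ↔ x ∈ D ∧ (orderOf x).Coprime p := by
    intro x
    constructor
    · rintro ⟨q, hq, rfl⟩
      refine ⟨q.2, ?_⟩
      have h1 : orderOf (D.subtype q) = orderOf q :=
        orderOf_injective D.subtype (Subgroup.subtype_injective D) q
      have h2 : orderOf (Qt.subtype ⟨q, hq⟩) = orderOf (⟨q, hq⟩ : Qt) :=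
        orderOf_injective Qt.subtype (Subgroup.subtype_injective Qt) ⟨q, hq⟩
      have h3 : orderOf (⟨q, hq⟩ : Qt) ∣ Nat.card Qt := orderOf_dvd_natCard _
      rw [h1]
      show (orderOf q).Coprime p
      rw [show orderOf q = orderOf (⟨q, hq⟩ : Qt) from h2.symm ▸ rfl]
      exact Nat.Coprime.coprime_dvd_left h3 (hcardQt ▸ hWcop)
    · rintro ⟨hxD, hxord⟩
      set d : ↥D := ⟨x, hxD⟩ with hd
      obtain ⟨⟨z, q⟩, hzq, -⟩ := Subgroup.IsComplement.existsUnique hQt d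
      have hzN : (z : ↥D) ∈ N := z.2
      have hqQt : (q : ↥D) ∈ Qt := q.2
      have hzZ : ((z : ↥D) : G) ∈ Z := Subgroup.mem_subgroupOf.mp hzN
      have hzc : ((z : ↥D) : G) ∈ Subgroup.center G := hZc hzZ
      have hcomm : Commute (z : ↥D) (q : ↥D) := by
        apply Subtype.ext
        exact (Subgroup.mem_center_iff.mp hzc _).symm
      set m := orderOf x with hm
      have hdm : d ^ m = 1 := by
        have h1 : orderOf (D.subtype d) = orderOf d :=
          orderOf_injective D.subtype (Subgroup.subtype_injective D) d
        have h2 : m = orderOf d := by rw [hm, ← h1]; rfl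
        rw [h2]
        exact pow_orderOf_eq_one d
      have hfact : ((z : ↥D) ^ m) * ((q : ↥D) ^ m) = 1 := by
        rw [← Commute.mul_pow hcomm, hzq, hdm]
      have huniq := (Subgroup.IsComplement.existsUnique hQt (1 : ↥D)).unique
        (y₁ := (⟨⟨(z : ↥D) ^ m, pow_mem hzN m⟩, ⟨(q : ↥D) ^ m, pow_mem hqQt m⟩⟩ :
          ↥(N : Set ↥D) × ↥(Qt : Set ↥D)))
        (y₂ := (⟨⟨1, one_mem N⟩, ⟨1, one_mem Qt⟩⟩ : ↥(N : Set ↥D) × ↥(Qt : Set ↥D)))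
        hfact (by simp)
      have hzm : (z : ↥D) ^ m = 1 := by
        have := congrArg (fun t => ((t.1 : ↥D))) huniq
        simpa using this
      have hzG : (((z : ↥D) : G)) ^ m = 1 := by
        have := congrArg (Subtype.val) hzm
        push_cast at this
        exact this
      obtain ⟨k, hk⟩ := (Op_pGroup (G := G) (p := p)) ⟨_, hzZ⟩
      have hkG : (((z : ↥D) : G)) ^ (p ^ k) = 1 := by
        have := congrArg (Subtype.val) hk
        push_cast at this
        exact this
      have hord1 : orderOf (((z : ↥D) : G)) = 1 := by
        have hd1 : orderOf (((z : ↥D) : G)) ∣ m := orderOf_dvd_of_pow_eq_one hzG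
        have hd2 : orderOf (((z : ↥D) : G)) ∣ p ^ k := orderOf_dvd_of_pow_eq_one hkG
        have hcop2 : (orderOf (((z : ↥D) : G))).Coprime (p ^ k) :=
          Nat.Coprime.pow_right k (Nat.Coprime.coprime_dvd_left hd1 hxord)
        exact hcop2.eq_one_of_dvd hd2
      have hz1 : ((z : ↥D) : G) = 1 := orderOf_eq_one_iff.mp hord1
      have hz1' : (z : ↥D) = 1 := by
        apply Subtype.ext
        exact hz1
      have hxq : d = (q : ↥D) := by rw [← hzq, hz1', one_mul]
      exact ⟨(q : ↥D), hqQt, by rw [← hxq]; rfl⟩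
  haveI hQn : Q.Normal := by
    constructor
    intro x hx g
    rw [hQchar] at hx ⊢
    refine ⟨hDn.conj_mem x hx.1 g, ?_⟩
    have hsc : SemiconjBy g x (g * x * g⁻¹) := by
      show g * x = (g * x * g⁻¹) * g
      group
    rw [← SemiconjBy.orderOf_eq g hsc]
    exact hx.2
  have hQcop : (Nat.card Q).Coprime p := by
    rw [Nat.coprime_comm]
    rw [Nat.Prime.coprime_iff_not_dvd hp]
    intro hdvd
    obtain ⟨y, hy⟩ := exists_prime_orderOf_dvd_card' p hdvd
    have h1 : orderOf ((y : G)) = orderOf y :=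
      orderOf_injective Q.subtype (Subgroup.subtype_injective Q) y
    have h2 : (orderOf ((y : G))).Coprime p := ((hQchar _).mp (SetLike.coe_mem y)).2
    rw [h1, hy] at h2
    have hp1 : p = 1 := by simpa [Nat.Coprime, Nat.gcd_self] using h2
    exact hp.one_lt.ne' hp1
  have hQbot : Q = ⊥ := by
    have := le_Op' hQn hQcop
    rw [hO, le_bot_iff] at this
    exact this
  have hcardQ : Nat.card Q = Nat.card W := by
    rw [hQdef, ← Nat.card_congr (Subgroup.equivMapOfInjective Qt D.subtype
      (Subgroup.subtype_injective D)).toEquiv]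
    exact hcardQt
  rw [hQbot, Subgroup.card_bot] at hcardQ
  exact hWne ((Subgroup.card_eq_one).mp hcardQ.symm)

end HallHigmanAux

/-- If `G` is a finite `p`-solvable group with `O_{p'}(G) = 1`,
then `C_G(O_p(G)) ≤ O_p(G)`. -/
theorem stmt_0 (p : ℕ) (hp : p.Prime) (G : Type*) [Group G] [Finite G]
    (hsolv : IsPSolvable p G) (h1 : Op' p G = ⊥) :
    Subgroup.centralizer ((Op p G : Subgroup G) : Set G) ≤ Op p G := by
  haveI : Fact p.Prime := ⟨hp⟩
  set P := Op p G with hP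
  set C := Subgroup.centralizer (P : Set G) with hC
  haveI hCn : C.Normal := by
    constructor
    intro x hx g
    rw [hC, Subgroup.mem_centralizer_iff] at hx ⊢
    intro h hh
    have hh' : g⁻¹ * h * g ∈ P := by
      have := (OpNormal p G).conj_mem h hh g⁻¹
      simpa using this
    have hcomm := hx _ hh'
    calc h * (g * x * g⁻¹) = g * ((g⁻¹ * h * g) * x) * g⁻¹ := by group
      _ = g * (x * (g⁻¹ * h * g)) * g⁻¹ := by rw [hcomm]
      _ = (g * x * g⁻¹) * h := by group
  have hPS : IsPSolvable p ↥C := isPSolvable_subgroup hp hsolv C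
  have hOp'C : Op' p ↥C = ⊥ := by
    have hcard : (Nat.card ↥((Op' p ↥C).map C.subtype)).Coprime p := by
      rw [← Nat.card_congr (Subgroup.equivMapOfInjective _ C.subtype
        (Subgroup.subtype_injective C)).toEquiv]
      exact card_Op'_coprime
    have hle : (Op' p ↥C).map C.subtype ≤ Op' p G := le_Op' (map_subtype_Op'_normal C) hcard
    rw [h1, le_bot_iff,
      Subgroup.map_eq_bot_iff_of_injective _ (Subgroup.subtype_injective C)] at hle
    exact hle
  have hOpC : (Op p ↥C).map C.subtype ≤ P :=
    le_Op (map_subtype_Op_normal C) (IsPGroup.map Op_pGroup C.subtype)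
  have hcen : (Op p ↥C : Subgroup ↥C) ≤ Subgroup.center ↥C := by
    intro z hz
    rw [Subgroup.mem_center_iff]
    intro c
    apply Subtype.ext
    push_cast
    have hzP : (z : G) ∈ P := hOpC ⟨z, hz, rfl⟩
    have hcC : (c : G) ∈ Subgroup.centralizer (P : Set G) := SetLike.coe_mem c
    exact (Subgroup.mem_centralizer_iff.mp hcC _ hzP).symm
  have hCp : IsPGroup p ↥C := pgroup_of_pSolvable hp hPS hOp'C hcen
  exact le_Op hCn hCp
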